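/- Let R > 0, P⁰ > 0, ε ∈ ℝ, and let e : (0,∞) → ℝ be differentiable with P·e′(P) ≠ ε for all P > 0. Define Q(T,P) = exp((ε·ln(P/P⁰) − e(P))/(R·T)) for T,P > 0, and let F : (0,∞) → ℝ be differentiable with F′(P) = (ε·P·ln(P/P⁰) − P·e(P))/(P·e′(P) − ε) for all P > 0. If γ(t) = (T(t),P(t)) is a differentiable curve with T(t) > 0, P(t) > 0 solving the gradient flow T′(t) = (∂Q/∂T)(γ(t)), P′(t) = (∂Q/∂P)(γ(t)), then t ↦ F(P(t)) − T(t)²/2 is constant. -/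

import Mathlib

/-- Paths of maximal reaction with error term, case `ε ≠ 0` allowed: for
`Q(T,P) = exp((ε·ln(P/P⁰) − e(P))/(R·T))` with `P·e′(P) ≠ ε`, and `F` an
antiderivative of `(ε·P·ln(P/P⁰) − P·e(P))/(P·e′(P) − ε)`, along any
gradient-flow curve of `Q` the quantity `F(P) − T²/2` is constant. -/
theorem maximal_reaction_paths_with_error
    (R P0 : ℝ) (hR : 0 < R) (hP0 : 0 < P0) (ε : ℝ)
    (e e' : ℝ → ℝ) (he : ∀ P > (0:ℝ), HasDerivAt e (e' P) P)
    (hne : ∀ P > (0:ℝ), P * e' P ≠ ε)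
    (Q : ℝ → ℝ → ℝ)
    (hQ : ∀ T P, Q T P = Real.exp ((ε * Real.log (P / P0) - e P) / (R * T)))
    (F : ℝ → ℝ)
    (hF : ∀ P > (0:ℝ), HasDerivAt F
      ((ε * P * Real.log (P / P0) - P * e P) / (P * e' P - ε)) P)
    (I : Set ℝ) (hI : I.OrdConnected)
    (T P : ℝ → ℝ)
    (hpos : ∀ t ∈ I, 0 < T t ∧ 0 < P t)
    (hT : ∀ t ∈ I, HasDerivAt T (deriv (fun s => Q s (P t)) (T t)) t)
    (hP : ∀ t ∈ I, HasDerivAt P (deriv (fun s => Q (T t) s) (P t)) t) :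
    ∀ t ∈ I, ∀ s ∈ I,
      F (P t) - T t ^ 2 / 2 = F (P s) - T s ^ 2 / 2 := by
  have key : ∀ u ∈ I, HasDerivAt (fun v => F (P v) - T v ^ 2 / 2) 0 u := by
    intro u hu
    obtain ⟨hTu, hPu⟩ := hpos u hu
    have hRT : R * T u ≠ 0 := ne_of_gt (mul_pos hR hTu)
    have hPne : P u ≠ 0 := ne_of_gt hPu
    have hP0ne : P0 ≠ 0 := ne_of_gt hP0
    have hdivne : P u / P0 ≠ 0 := div_ne_zero hPne hP0ne
    have hsubne : P u * e' (P u) - ε ≠ 0 := sub_ne_zero.2 (hne (P u) hPu)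
    -- derivative in T direction
    have hfun1 : (fun s => Q s (P u))
        = fun s => Real.exp ((ε * Real.log (P u / P0) - e (P u)) / (R * s)) := by
      funext s; rw [hQ]
    have hd1 : HasDerivAt (fun s => Real.exp ((ε * Real.log (P u / P0) - e (P u)) / (R * s)))
        (Real.exp ((ε * Real.log (P u / P0) - e (P u)) / (R * T u)) *
          ((0 * (R * T u) - (ε * Real.log (P u / P0) - e (P u)) * (R * 1)) / (R * T u) ^ 2))
        (T u) :=
      ((hasDerivAt_const (T u) (ε * Real.log (P u / P0) - e (P u))).div
        ((hasDerivAt_id (T u)).const_mul R) hRT).exp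
    have hT' : HasDerivAt T
        (Real.exp ((ε * Real.log (P u / P0) - e (P u)) / (R * T u)) *
          ((0 * (R * T u) - (ε * Real.log (P u / P0) - e (P u)) * (R * 1)) / (R * T u) ^ 2)) u := by
      have := hT u hu
      rwa [hfun1, hd1.deriv] at this
    -- derivative in P direction
    have hfun2 : (fun s => Q (T u) s)
        = fun s => Real.exp ((ε * Real.log (s / P0) - e s) / (R * T u)) := by
      funext s; rw [hQ]
    have hlog : HasDerivAt (fun s => Real.log (s / P0)) ((1 / P0) / (P u / P0)) (P u) :=
      (((hasDerivAt_id (P u)).div_const P0).log hdivne)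
    have hd2 : HasDerivAt (fun s => Real.exp ((ε * Real.log (s / P0) - e s) / (R * T u)))
        (Real.exp ((ε * Real.log (P u / P0) - e (P u)) / (R * T u)) *
          ((ε * ((1 / P0) / (P u / P0)) - e' (P u)) / (R * T u))) (P u) :=
      (((hlog.const_mul ε).sub (he (P u) hPu)).div_const (R * T u)).exp
    have hP' : HasDerivAt P
        (Real.exp ((ε * Real.log (P u / P0) - e (P u)) / (R * T u)) *
          ((ε * ((1 / P0) / (P u / P0)) - e' (P u)) / (R * T u))) u := by
      have := hP u hu
      rwa [hfun2, hd2.deriv] at this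
    have hFP : HasDerivAt (fun v => F (P v))
        ((ε * P u * Real.log (P u / P0) - P u * e (P u)) / (P u * e' (P u) - ε) *
          (Real.exp ((ε * Real.log (P u / P0) - e (P u)) / (R * T u)) *
            ((ε * ((1 / P0) / (P u / P0)) - e' (P u)) / (R * T u)))) u :=
      (hF (P u) hPu).comp u hP'
    have hTT : HasDerivAt (fun v => T v ^ 2 / 2)
        ((↑2 * T u ^ (2 - 1) *
          (Real.exp ((ε * Real.log (P u / P0) - e (P u)) / (R * T u)) *
            ((0 * (R * T u) - (ε * Real.log (P u / P0) - e (P u)) * (R * 1)) / (R * T u) ^ 2))) / 2)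
        u := (hT'.pow 2).div_const 2
    have := hFP.sub hTT
    convert this using 1
    · exact rfl
    · exact rfl
    · exact rfl
    have h1d : (1 / P0) / (P u / P0) = 1 / P u := by
      field_simp
    rw [h1d]
    field_simp
    ring
  intro t ht s hs
  rcases le_total s t with hts | hts
  · have hIcc : Set.Icc s t ⊆ I := hI.out hs ht
    have hconst := constant_of_has_deriv_right_zero
      (f := fun v => F (P v) - T v ^ 2 / 2) (a := s) (b := t)
      (fun x hx => (key x (hIcc hx)).continuousAt.continuousWithinAt)
      (fun x hx => (key x (hIcc (Set.mem_Icc_of_Ico hx))).hasDerivWithinAt)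
    exact hconst t (Set.mem_Icc.2 ⟨hts, le_refl t⟩)
  · have hIcc : Set.Icc t s ⊆ I := hI.out ht hs
    have hconst := constant_of_has_deriv_right_zero
      (f := fun v => F (P v) - T v ^ 2 / 2) (a := t) (b := s)
      (fun x hx => (key x (hIcc hx)).continuousAt.continuousWithinAt)
      (fun x hx => (key x (hIcc (Set.mem_Icc_of_Ico hx))).hasDerivWithinAt)
    exact (hconst s (Set.mem_Icc.2 ⟨hts, le_refl s⟩)).symm
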